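/- Let d ≥ 1 and s, l ∈ ℝ. There exist a constant c > 0 and N₀ ∈ ℕ, depending only on d, s, l, such that for every integer N ≥ N₀ the following holds. Set Q := (−1/2, 1/2)^d, r := (log N)^{−2}, Σ_u := {0} and Σ_n := {Ne₁, −Ne₁}. Then for every T with 0 < T ≤ c·N^{−2}, (∫_{ℝ^d} ⟨ξ⟩^{2s} |S(T,ξ)|² dξ)^{1/2} ≥ c · r² · T · N^{s−l}. -/

import Mathlib

open MeasureTheory Set
open scoped Classical

noncomputable section

/-- The (Fourier-side) Schrödinger component of the second Picard iterate, up to a unimodular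
factor: `S(T,ξ) = r²|Q|⁻¹ Σ_{η_u∈Σ_u,η_n∈Σ_n} ∫_{η_u+Q} 1_{η_n+Q}(ξ−η) ⟨η⟩^{−s}⟨ξ−η⟩^{−l}
  ½∫₀ᵀ (e^{iσ(|ξ|²−|η|²+|ξ−η|)} + e^{iσ(|ξ|²−|η|²−|ξ−η|)}) dσ dη`. -/
def Sfun {d : ℕ} (s l r : ℝ) (Q : Set (EuclideanSpace ℝ (Fin d)))
    (Su Sn : Finset (EuclideanSpace ℝ (Fin d))) (T : ℝ) (ξ : EuclideanSpace ℝ (Fin d)) : ℂ :=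
  ((r ^ 2 * ((volume Q).toReal)⁻¹ : ℝ) : ℂ) *
    ∑ ηu ∈ Su, ∑ ηn ∈ Sn,
      ∫ η in {ζ : EuclideanSpace ℝ (Fin d) | ζ - ηu ∈ Q},
        Set.indicator {ζ : EuclideanSpace ℝ (Fin d) | ζ - ηn ∈ Q} (fun _ => (1 : ℂ)) (ξ - η) *
          (((1 + ‖η‖ ^ 2) ^ (-s / 2) * (1 + ‖ξ - η‖ ^ 2) ^ (-l / 2) : ℝ) : ℂ) *
          ((∫ σ in (0 : ℝ)..T,
              (Complex.exp (Complex.I * ((σ * (‖ξ‖ ^ 2 - ‖η‖ ^ 2 + ‖ξ - η‖) : ℝ) : ℂ)) +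
                Complex.exp (Complex.I * ((σ * (‖ξ‖ ^ 2 - ‖η‖ ^ 2 - ‖ξ - η‖) : ℝ) : ℂ)))) / 2)

lemma cube_vol (d : ℕ) (a : EuclideanSpace ℝ (Fin d)) (ε : ℝ) :
    volume {ξ : EuclideanSpace ℝ (Fin d) | ∀ i, |ξ i - a i| < ε} =
      ENNReal.ofReal (2*ε) ^ d := by
  have e := PiLp.volume_preserving_ofLp (Fin d)
  have h : {ξ : EuclideanSpace ℝ (Fin d) | ∀ i, |ξ i - a i| < ε} =
      (WithLp.ofLp (p := 2) (V := Fin d → ℝ)) ⁻¹' (Set.univ.pi fun i => Set.Ioo (a i - ε) (a i + ε)) := by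
    ext ξ
    simp only [Set.mem_pi, Set.mem_setOf_eq,
      Set.mem_preimage, Set.mem_Ioo, Set.mem_univ, forall_true_left,
      abs_lt]
    constructor
    · intro h i; constructor <;> linarith [(h i).1, (h i).2]
    · intro h i; constructor <;> linarith [(h i).1, (h i).2]
  rw [h, e.measure_preimage
    ((MeasurableSet.univ_pi fun i => measurableSet_Ioo).nullMeasurableSet)]
  rw [volume_pi_pi]
  simp only [Real.volume_Ioo]
  have h2 : ∀ x : Fin d, a x + ε - (a x - ε) = 2 * ε := fun x => by ring
  simp only [h2]
  rw [Finset.prod_const, Finset.card_univ, Fintype.card_fin]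

lemma cube_open (d : ℕ) (a : EuclideanSpace ℝ (Fin d)) (ε : ℝ) :
    IsOpen {ξ : EuclideanSpace ℝ (Fin d) | ∀ i, |ξ i - a i| < ε} := by
  have : {ξ : EuclideanSpace ℝ (Fin d) | ∀ i, |ξ i - a i| < ε} =
      ⋂ i, {ξ : EuclideanSpace ℝ (Fin d) | |ξ i - a i| < ε} := by
    ext ξ; simp
  rw [this]
  refine isOpen_iInter_of_finite fun i => ?_
  have hc : Continuous fun ξ : EuclideanSpace ℝ (Fin d) => |ξ i - a i| := by fun_prop
  exact isOpen_lt hc continuous_const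

def Kker (T A B : ℝ) : ℂ :=
  (∫ σ in (0:ℝ)..T,
      (Complex.exp (Complex.I * ((σ * A : ℝ) : ℂ)) +
        Complex.exp (Complex.I * ((σ * B : ℝ) : ℂ)))) / 2

lemma Kker_cont (T : ℝ) : Continuous fun p : ℝ × ℝ => Kker T p.1 p.2 := by
  unfold Kker
  apply Continuous.div_const
  apply intervalIntegral.continuous_parametric_intervalIntegral_of_continuous'
  apply Continuous.add <;>
  · apply Complex.continuous_exp.comp
    apply Continuous.mul continuous_const
    apply Complex.continuous_ofReal.comp
    fun_prop

lemma Kker_norm_le (T A B : ℝ) (hT : 0 ≤ T) : ‖Kker T A B‖ ≤ T := by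
  unfold Kker
  rw [norm_div]
  have h : ‖∫ σ in (0:ℝ)..T,
      (Complex.exp (Complex.I * ((σ * A : ℝ) : ℂ)) +
        Complex.exp (Complex.I * ((σ * B : ℝ) : ℂ)))‖ ≤ 2 * |T - 0| := by
    apply intervalIntegral.norm_integral_le_of_norm_le_const
    intro x _
    calc ‖_ + _‖ ≤ ‖Complex.exp (Complex.I * ((x * A : ℝ) : ℂ))‖ +
          ‖Complex.exp (Complex.I * ((x * B : ℝ) : ℂ))‖ := norm_add_le _ _
      _ ≤ 2 := by
          rw [mul_comm Complex.I, mul_comm Complex.I, Complex.norm_exp_ofReal_mul_I,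
            Complex.norm_exp_ofReal_mul_I]
          norm_num
  rw [sub_zero, _root_.abs_of_nonneg hT] at h
  have h2 : ‖(2:ℂ)‖ = 2 := by norm_num
  rw [h2]
  linarith

lemma Kker_re_ge (T A B : ℝ) (hT : 0 ≤ T) (hA : ∀ σ ∈ Set.uIcc 0 T, |σ * A| ≤ 1)
    (hB : ∀ σ ∈ Set.uIcc 0 T, |σ * B| ≤ 1) : T / 2 ≤ (Kker T A B).re := by
  unfold Kker
  have hint : ∀ C : ℝ, IntervalIntegrable
      (fun σ : ℝ => Complex.exp (Complex.I * ((σ * C : ℝ) : ℂ))) volume 0 T := by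
    intro C
    apply Continuous.intervalIntegrable
    apply Complex.continuous_exp.comp
    fun_prop
  have key : (∫ σ in (0:ℝ)..T,
      (Complex.exp (Complex.I * ((σ * A : ℝ) : ℂ)) +
        Complex.exp (Complex.I * ((σ * B : ℝ) : ℂ)))).re
      = ∫ σ in (0:ℝ)..T, (Real.cos (σ * A) + Real.cos (σ * B)) := by
    calc (∫ σ in (0:ℝ)..T, (Complex.exp (Complex.I * ((σ * A : ℝ) : ℂ)) +
            Complex.exp (Complex.I * ((σ * B : ℝ) : ℂ)))).re
        = Complex.reCLM (∫ σ in (0:ℝ)..T, (Complex.exp (Complex.I * ((σ * A : ℝ) : ℂ)) +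
            Complex.exp (Complex.I * ((σ * B : ℝ) : ℂ)))) := rfl
      _ = ∫ σ in (0:ℝ)..T, Complex.reCLM (Complex.exp (Complex.I * ((σ * A : ℝ) : ℂ)) +
            Complex.exp (Complex.I * ((σ * B : ℝ) : ℂ))) :=
          (Complex.reCLM.intervalIntegral_comp_comm ((hint A).add (hint B))).symm
      _ = ∫ σ in (0:ℝ)..T, (Real.cos (σ * A) + Real.cos (σ * B)) := by
          apply intervalIntegral.integral_congr
          intro σ _
          simp only [Complex.reCLM_apply, Complex.add_re, mul_comm Complex.I,
            Complex.exp_ofReal_mul_I_re]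
  have h2 : (∫ σ in (0:ℝ)..T, (1:ℝ)) ≤
      ∫ σ in (0:ℝ)..T, (Real.cos (σ * A) + Real.cos (σ * B)) := by
    apply intervalIntegral.integral_mono_on hT
    · exact intervalIntegrable_const
    · apply Continuous.intervalIntegrable; fun_prop
    · intro σ hσ
      have c1 : 1 - (σ*A)^2/2 ≤ Real.cos (σ * A) := Real.one_sub_sq_div_two_le_cos
      have c2 : 1 - (σ*B)^2/2 ≤ Real.cos (σ * B) := Real.one_sub_sq_div_two_le_cos
      have hA' := hA σ (Set.mem_uIcc.2 (Or.inl ⟨hσ.1, hσ.2⟩))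
      have hB' := hB σ (Set.mem_uIcc.2 (Or.inl ⟨hσ.1, hσ.2⟩))
      have e1 : (σ*A)^2 ≤ 1 := by nlinarith [abs_nonneg (σ*A), _root_.sq_abs (σ*A)]
      have e2 : (σ*B)^2 ≤ 1 := by nlinarith [abs_nonneg (σ*B), _root_.sq_abs (σ*B)]
      nlinarith
  have h3 : (∫ σ in (0:ℝ)..T, (1:ℝ)) = T := by simp
  rw [Complex.div_ofNat_re, key]
  linarith

def Q0 (d : ℕ) : Set (EuclideanSpace ℝ (Fin d)) := {ξ | ∀ i, |ξ i| < 1/2}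

lemma cube_eq (d : ℕ) (b : EuclideanSpace ℝ (Fin d)) :
    {ζ : EuclideanSpace ℝ (Fin d) | ζ - b ∈ Q0 d} =
      {ζ : EuclideanSpace ℝ (Fin d) | ∀ i, |ζ i - b i| < 1/2} := by
  ext ζ
  simp only [Q0, Set.mem_setOf_eq]
  constructor <;> intro h i <;> simpa [PiLp.sub_apply] using h i

lemma Q0_eq (d : ℕ) : Q0 d = {ξ : EuclideanSpace ℝ (Fin d) | ∀ i, |ξ i - (0:EuclideanSpace ℝ (Fin d)) i| < 1/2} := by
  ext ξ; simp [Q0]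

lemma Q0_meas (d : ℕ) : MeasurableSet (Q0 d) := by
  rw [Q0_eq]; exact (cube_open d 0 _).measurableSet

lemma cube_meas (d : ℕ) (b : EuclideanSpace ℝ (Fin d)) :
    MeasurableSet {ζ : EuclideanSpace ℝ (Fin d) | ζ - b ∈ Q0 d} := by
  rw [cube_eq]; exact (cube_open d b _).measurableSet

lemma Q0_vol (d : ℕ) : volume (Q0 d) = 1 := by
  rw [Q0_eq, cube_vol]; norm_num

def Gfun (d : ℕ) (s l T : ℝ) (b : EuclideanSpace ℝ (Fin d))
    (ξ η : EuclideanSpace ℝ (Fin d)) : ℂ :=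
  Set.indicator {ζ : EuclideanSpace ℝ (Fin d) | ζ - b ∈ Q0 d} (fun _ => (1:ℂ)) (ξ - η) *
    (((1 + ‖η‖ ^ 2) ^ (-s / 2) * (1 + ‖ξ - η‖ ^ 2) ^ (-l / 2) : ℝ) : ℂ) *
    Kker T (‖ξ‖ ^ 2 - ‖η‖ ^ 2 + ‖ξ - η‖) (‖ξ‖ ^ 2 - ‖η‖ ^ 2 - ‖ξ - η‖)

lemma Sfun_eq (d : ℕ) (s l r T : ℝ) (a : EuclideanSpace ℝ (Fin d)) (ha : a ≠ -a)
    (ξ : EuclideanSpace ℝ (Fin d)) :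
    Sfun s l r (Q0 d) {0} {a, -a} T ξ =
      ((r ^ 2 : ℝ) : ℂ) *
        ((∫ η in Q0 d, Gfun d s l T a ξ η) + ∫ η in Q0 d, Gfun d s l T (-a) ξ η) := by
  unfold Sfun
  rw [Finset.sum_singleton, Finset.sum_pair ha]
  have hdom : {ζ : EuclideanSpace ℝ (Fin d) | ζ - 0 ∈ Q0 d} = Q0 d := by
    ext ζ; simp
  rw [hdom, Q0_vol]
  simp only [ENNReal.toReal_one, inv_one, mul_one]
  rfl

lemma weight_cont (d : ℕ) (s l : ℝ) : Continuous fun p : EuclideanSpace ℝ (Fin d) × EuclideanSpace ℝ (Fin d) =>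
    (((1 + ‖p.2‖ ^ 2) ^ (-s / 2) * (1 + ‖p.1 - p.2‖ ^ 2) ^ (-l / 2) : ℝ) : ℂ) := by
  apply Complex.continuous_ofReal.comp
  apply Continuous.mul
  · apply Continuous.rpow_const (continuous_const.add (continuous_snd.norm.pow 2))
    intro p; left; simp only [Pi.add_apply, Pi.pow_apply]; positivity
  · apply Continuous.rpow_const
      (continuous_const.add ((continuous_fst.sub continuous_snd).norm.pow 2))
    intro p; left; simp only [Pi.add_apply, Pi.pow_apply]; positivity

lemma Kker_cont2 {X : Type*} [TopologicalSpace X] (T : ℝ) {A B : X → ℝ}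
    (hA : Continuous A) (hB : Continuous B) :
    Continuous fun x => Kker T (A x) (B x) := by
  unfold Kker
  apply Continuous.div_const
  apply intervalIntegral.continuous_parametric_intervalIntegral_of_continuous'
  apply Continuous.add
  · exact Complex.continuous_exp.comp (continuous_const.mul
      (Complex.continuous_ofReal.comp (continuous_snd.mul (hA.comp continuous_fst))))
  · exact Complex.continuous_exp.comp (continuous_const.mul
      (Complex.continuous_ofReal.comp (continuous_snd.mul (hB.comp continuous_fst))))

lemma Kker_comp_cont (d : ℕ) (T : ℝ) : Continuous fun p : EuclideanSpace ℝ (Fin d) × EuclideanSpace ℝ (Fin d) =>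
    Kker T (‖p.1‖ ^ 2 - ‖p.2‖ ^ 2 + ‖p.1 - p.2‖) (‖p.1‖ ^ 2 - ‖p.2‖ ^ 2 - ‖p.1 - p.2‖) := by
  have hA : Continuous fun p : EuclideanSpace ℝ (Fin d) × EuclideanSpace ℝ (Fin d) =>
      ‖p.1‖ ^ 2 - ‖p.2‖ ^ 2 + ‖p.1 - p.2‖ :=
    ((continuous_fst.norm.pow 2).sub (continuous_snd.norm.pow 2)).add
      ((continuous_fst.sub continuous_snd).norm)
  have hB : Continuous fun p : EuclideanSpace ℝ (Fin d) × EuclideanSpace ℝ (Fin d) =>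
      ‖p.1‖ ^ 2 - ‖p.2‖ ^ 2 - ‖p.1 - p.2‖ :=
    ((continuous_fst.norm.pow 2).sub (continuous_snd.norm.pow 2)).sub
      ((continuous_fst.sub continuous_snd).norm)
  exact Kker_cont2 T hA hB

lemma Gfun_SM (d : ℕ) (s l T : ℝ) (b : EuclideanSpace ℝ (Fin d)) :
    StronglyMeasurable fun p : EuclideanSpace ℝ (Fin d) × EuclideanSpace ℝ (Fin d) =>
      Gfun d s l T b p.1 p.2 := by
  unfold Gfun
  apply Measurable.stronglyMeasurable
  apply Measurable.mul
  apply Measurable.mul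
  · exact (measurable_const.indicator (cube_meas d b)).comp
      (measurable_fst.sub measurable_snd)
  · exact (weight_cont d s l).measurable
  · exact (Kker_comp_cont d T).measurable

lemma intG_SM (d : ℕ) (s l T : ℝ) (b : EuclideanSpace ℝ (Fin d)) :
    StronglyMeasurable fun ξ : EuclideanSpace ℝ (Fin d) =>
      ∫ η in Q0 d, Gfun d s l T b ξ η := by
  have key : ∀ ξ : EuclideanSpace ℝ (Fin d), (∫ η in Q0 d, Gfun d s l T b ξ η) =
      ∫ η, Set.indicator (Set.univ ×ˢ Q0 d)
        (fun p : EuclideanSpace ℝ (Fin d) × EuclideanSpace ℝ (Fin d) =>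
          Gfun d s l T b p.1 p.2) (ξ, η) := by
    intro ξ
    rw [← integral_indicator (Q0_meas d)]
    congr 1
    ext η
    by_cases hη : η ∈ Q0 d
    · rw [Set.indicator_of_mem hη, Set.indicator_of_mem (by simp [hη])]
    · rw [Set.indicator_of_notMem hη, Set.indicator_of_notMem (by simp [hη])]
  simp only [key]
  exact ((Gfun_SM d s l T b).indicator (MeasurableSet.univ.prod (Q0_meas d))).integral_prod_right'

lemma Sfun_SM (d : ℕ) (s l r T : ℝ) (a : EuclideanSpace ℝ (Fin d)) (ha : a ≠ -a) :
    StronglyMeasurable fun ξ => Sfun s l r (Q0 d) {0} {a, -a} T ξ := by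
  have : (fun ξ => Sfun s l r (Q0 d) {0} {a, -a} T ξ) = fun ξ =>
      ((r ^ 2 : ℝ) : ℂ) *
        ((∫ η in Q0 d, Gfun d s l T a ξ η) + ∫ η in Q0 d, Gfun d s l T (-a) ξ η) := by
    funext ξ; exact Sfun_eq d s l r T a ha ξ
  rw [this]
  exact ((intG_SM d s l T a).add (intG_SM d s l T (-a))).const_mul _

lemma norm_le_of_cube' (d : ℕ) (ζ : EuclideanSpace ℝ (Fin d)) (ε : ℝ) (hε : 0 ≤ ε)
    (h : ∀ i, |ζ i| ≤ ε) : ‖ζ‖ ≤ Real.sqrt d * ε := by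
  rw [EuclideanSpace.norm_eq]
  simp only [Real.norm_eq_abs]
  have h1 : ∑ i, |ζ i| ^ 2 ≤ (d : ℝ) * ε ^ 2 := by
    calc ∑ i, |ζ i| ^ 2 ≤ ∑ _i : Fin d, ε ^ 2 :=
          Finset.sum_le_sum fun i _ => pow_le_pow_left₀ (abs_nonneg _) (h i) 2
      _ = (d : ℝ) * ε ^ 2 := by rw [Finset.sum_const, Finset.card_univ, Fintype.card_fin,
            nsmul_eq_mul]
  calc Real.sqrt (∑ i, |ζ i| ^ 2) ≤ Real.sqrt ((d:ℝ) * ε ^ 2) := Real.sqrt_le_sqrt h1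
    _ = Real.sqrt d * ε := by
        rw [Real.sqrt_mul (Nat.cast_nonneg d), Real.sqrt_sq hε]

lemma mem_Q0_norm (d : ℕ) (ζ : EuclideanSpace ℝ (Fin d)) (h : ζ ∈ Q0 d) :
    ‖ζ‖ ≤ Real.sqrt d / 2 := by
  have := norm_le_of_cube' d ζ (1/2) (by norm_num) (fun i => (h i).le)
  linarith

lemma rpow_le_max (A B x t : ℝ) (hA : 0 < A) (h1 : A ≤ x) (h2 : x ≤ B) :
    x ^ t ≤ max (A ^ t) (B ^ t) := by
  rcases le_or_gt 0 t with ht | ht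
  · exact le_trans (Real.rpow_le_rpow (hA.trans_le h1).le h2 ht) (le_max_right _ _)
  · exact le_trans (Real.rpow_le_rpow_of_nonpos hA h1 ht.le) (le_max_left _ _)

lemma min_rpow_le (A B x t : ℝ) (hA : 0 < A) (h1 : A ≤ x) (h2 : x ≤ B) :
    min (A ^ t) (B ^ t) ≤ x ^ t := by
  rcases le_or_gt 0 t with ht | ht
  · exact le_trans (min_le_left _ _) (Real.rpow_le_rpow hA.le h1 ht)
  · exact le_trans (min_le_right _ _) (Real.rpow_le_rpow_of_nonpos (hA.trans_le h1) h2 ht.le)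

def Mw (d : ℕ) (s : ℝ) (R : ℝ) : ℝ := max ((1:ℝ) ^ (-s/2)) ((1 + R ^ 2) ^ (-s/2))

lemma Mw_ge_one (d : ℕ) (s R : ℝ) : 1 ≤ Mw d s R := by
  calc (1:ℝ) = (1:ℝ) ^ (-s/2) := (Real.one_rpow _).symm
    _ ≤ Mw d s R := le_max_left _ _

lemma Mw_pos (d : ℕ) (s R : ℝ) : 0 < Mw d s R := lt_of_lt_of_le one_pos (Mw_ge_one d s R)

lemma weight_le_Mw (d : ℕ) (s R : ℝ) (x : ℝ) (hx0 : 0 ≤ x) (hx : x ≤ R) :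
    (1 + x ^ 2) ^ (-s/2) ≤ Mw d s R := by
  exact rpow_le_max 1 (1 + R ^ 2) (1 + x ^ 2) (-s/2) one_pos (by nlinarith) (by nlinarith)

lemma Gfun_norm_le (d : ℕ) (s l T : ℝ) (b ξ η : EuclideanSpace ℝ (Fin d))
    (hT : 0 ≤ T) (hη : η ∈ Q0 d) :
    ‖Gfun d s l T b ξ η‖ ≤
      Mw d s (Real.sqrt d) * Mw d l (‖b‖ + Real.sqrt d) * T := by
  have hM1 := Mw_pos d s (Real.sqrt d)
  have hM2 := Mw_pos d l (‖b‖ + Real.sqrt d)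
  unfold Gfun
  by_cases hin : ξ - η ∈ {ζ : EuclideanSpace ℝ (Fin d) | ζ - b ∈ Q0 d}
  · rw [Set.indicator_of_mem hin]
    rw [norm_mul, norm_mul, norm_one, one_mul, Complex.norm_real, Real.norm_eq_abs,
      abs_of_nonneg (mul_nonneg (Real.rpow_nonneg (by positivity) _)
        (Real.rpow_nonneg (by positivity) _))]
    have hw1 : (1 + ‖η‖ ^ 2) ^ (-s/2) ≤ Mw d s (Real.sqrt d) := by
      apply weight_le_Mw d s _ _ (norm_nonneg η)
      have := mem_Q0_norm d η hη
      have h0 : 0 ≤ Real.sqrt d := Real.sqrt_nonneg d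
      linarith
    have hw2 : (1 + ‖ξ - η‖ ^ 2) ^ (-l/2) ≤ Mw d l (‖b‖ + Real.sqrt d) := by
      apply weight_le_Mw d l _ _ (norm_nonneg _)
      have h1 : ‖ξ - η - b‖ ≤ Real.sqrt d / 2 := mem_Q0_norm d _ hin
      have h2 : ‖ξ - η‖ ≤ ‖ξ - η - b‖ + ‖b‖ := by
        calc ‖ξ - η‖ = ‖(ξ - η - b) + b‖ := by rw [show (ξ - η - b) + b = ξ - η from by abel]
          _ ≤ ‖ξ - η - b‖ + ‖b‖ := norm_add_le _ _
      have h0 : 0 ≤ Real.sqrt d := Real.sqrt_nonneg d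
      linarith
    exact mul_le_mul (mul_le_mul hw1 hw2 (Real.rpow_nonneg (by positivity) _) hM1.le)
      (Kker_norm_le T _ _ hT) (norm_nonneg _) (by positivity)
  · rw [Set.indicator_of_notMem hin, zero_mul, zero_mul, norm_zero]
    positivity

lemma Gfun_integrableOn (d : ℕ) (s l T : ℝ) (b ξ : EuclideanSpace ℝ (Fin d)) (hT : 0 ≤ T) :
    IntegrableOn (fun η => Gfun d s l T b ξ η) (Q0 d) volume := by
  apply Measure.integrableOn_of_bounded (M := Mw d s (Real.sqrt d) * Mw d l (‖b‖ + Real.sqrt d) * T)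
  · simp [Q0_vol]
  · exact ((Gfun_SM d s l T b).comp_measurable measurable_prodMk_left).aestronglyMeasurable
  · exact (ae_restrict_iff' (Q0_meas d)).2 (ae_of_all _ fun η hη => Gfun_norm_le d s l T b ξ η hT hη)

lemma Gfun_vanish (d : ℕ) (s l T : ℝ) (b ξ η : EuclideanSpace ℝ (Fin d))
    (hξ : ‖b‖ + Real.sqrt d < ‖ξ‖) (hη : η ∈ Q0 d) : Gfun d s l T b ξ η = 0 := by
  have hin : ξ - η ∉ {ζ : EuclideanSpace ℝ (Fin d) | ζ - b ∈ Q0 d} := by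
    intro hmem
    have h1 : ‖ξ - η - b‖ ≤ Real.sqrt d / 2 := mem_Q0_norm d _ hmem
    have h2 : ‖η‖ ≤ Real.sqrt d / 2 := mem_Q0_norm d _ hη
    have h3 : ‖ξ‖ ≤ ‖ξ - η - b‖ + ‖η‖ + ‖b‖ := by
      calc ‖ξ‖ = ‖(ξ - η - b) + η + b‖ := by rw [show (ξ - η - b) + η + b = ξ from by abel]
        _ ≤ ‖ξ - η - b‖ + ‖η‖ + ‖b‖ := norm_add₃_le
    linarith
  unfold Gfun
  rw [Set.indicator_of_notMem hin, zero_mul, zero_mul]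

lemma Sfun_vanish (d : ℕ) (s l r T : ℝ) (a : EuclideanSpace ℝ (Fin d)) (ha : a ≠ -a)
    (ξ : EuclideanSpace ℝ (Fin d)) (hξ : ‖a‖ + Real.sqrt d < ‖ξ‖) :
    Sfun s l r (Q0 d) {0} {a, -a} T ξ = 0 := by
  rw [Sfun_eq d s l r T a ha ξ]
  have h1 : ∫ η in Q0 d, Gfun d s l T a ξ η = 0 := by
    rw [setIntegral_eq_zero_of_forall_eq_zero fun η hη => Gfun_vanish d s l T a ξ η hξ hη]
  have h2 : ∫ η in Q0 d, Gfun d s l T (-a) ξ η = 0 := by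
    rw [setIntegral_eq_zero_of_forall_eq_zero fun η hη =>
      Gfun_vanish d s l T (-a) ξ η (by rwa [norm_neg]) hη]
  rw [h1, h2, add_zero, mul_zero]

lemma Sfun_norm_le (d : ℕ) (s l r T : ℝ) (a : EuclideanSpace ℝ (Fin d)) (ha : a ≠ -a)
    (hT : 0 ≤ T) (ξ : EuclideanSpace ℝ (Fin d)) :
    ‖Sfun s l r (Q0 d) {0} {a, -a} T ξ‖ ≤
      r ^ 2 * (2 * (Mw d s (Real.sqrt d) * Mw d l (‖a‖ + Real.sqrt d) * T)) := by
  rw [Sfun_eq d s l r T a ha ξ]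
  rw [norm_mul, Complex.norm_real, Real.norm_eq_abs, abs_of_nonneg (sq_nonneg r)]
  have key : ∀ b : EuclideanSpace ℝ (Fin d), ‖b‖ = ‖a‖ →
      ‖∫ η in Q0 d, Gfun d s l T b ξ η‖ ≤
        Mw d s (Real.sqrt d) * Mw d l (‖a‖ + Real.sqrt d) * T := by
    intro b hb
    have h := norm_setIntegral_le_of_norm_le_const_ae
      (μ := volume) (s := Q0 d) (f := fun η => Gfun d s l T b ξ η)
      (C := Mw d s (Real.sqrt d) * Mw d l (‖a‖ + Real.sqrt d) * T)
      (by simp [Q0_vol])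
      ((ae_restrict_iff' (Q0_meas d)).2 (ae_of_all _ fun η hη => by
        have := Gfun_norm_le d s l T b ξ η hT hη
        rwa [hb] at this))
    simpa [Q0_vol, Measure.real] using h
  have hsum : ‖(∫ η in Q0 d, Gfun d s l T a ξ η) + ∫ η in Q0 d, Gfun d s l T (-a) ξ η‖
      ≤ 2 * (Mw d s (Real.sqrt d) * Mw d l (‖a‖ + Real.sqrt d) * T) := by
    calc ‖(∫ η in Q0 d, Gfun d s l T a ξ η) + ∫ η in Q0 d, Gfun d s l T (-a) ξ η‖
        ≤ ‖∫ η in Q0 d, Gfun d s l T a ξ η‖ + ‖∫ η in Q0 d, Gfun d s l T (-a) ξ η‖ :=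
          norm_add_le _ _
      _ ≤ Mw d s (Real.sqrt d) * Mw d l (‖a‖ + Real.sqrt d) * T +
          Mw d s (Real.sqrt d) * Mw d l (‖a‖ + Real.sqrt d) * T :=
          add_le_add (key a rfl) (key (-a) (norm_neg a))
      _ = 2 * (Mw d s (Real.sqrt d) * Mw d l (‖a‖ + Real.sqrt d) * T) := by ring
  exact mul_le_mul_of_nonneg_left hsum (sq_nonneg r)

def aVec (d : ℕ) (i : Fin d) (N : ℕ) : EuclideanSpace ℝ (Fin d) :=
  (N : ℝ) • EuclideanSpace.single i (1 : ℝ)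

lemma aVec_norm (d : ℕ) (i : Fin d) (N : ℕ) : ‖aVec d i N‖ = N := by
  rw [aVec, norm_smul, EuclideanSpace.norm_single]
  simp

lemma aVec_apply_self (d : ℕ) (i : Fin d) (N : ℕ) : aVec d i N i = N := by
  simp [aVec, EuclideanSpace.single_apply]

lemma aVec_ne_neg (d : ℕ) (i : Fin d) (N : ℕ) (hN : 1 ≤ N) :
    aVec d i N ≠ -(aVec d i N) := by
  intro h
  have h2 : aVec d i N i = (-(aVec d i N)) i := by rw [← h]
  rw [aVec_apply_self] at h2
  have h3 : (-(aVec d i N)) i = -(aVec d i N i) := rfl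
  rw [h3, aVec_apply_self] at h2
  have hN1 : (1:ℝ) ≤ (N:ℝ) := by exact_mod_cast hN
  linarith

def Aset (d : ℕ) (a : EuclideanSpace ℝ (Fin d)) : Set (EuclideanSpace ℝ (Fin d)) :=
  {ξ | ∀ i, |ξ i - a i| < 1/4}

def Qp (d : ℕ) : Set (EuclideanSpace ℝ (Fin d)) :=
  {η | ∀ i, |η i - (0 : EuclideanSpace ℝ (Fin d)) i| < 1/8}

lemma low_weight (x N t : ℝ) (hN : 0 < N) (h1 : N^2/4 ≤ x) (h2 : x ≤ 4*N^2) :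
    min ((4:ℝ)^t) ((4:ℝ)^(-t)) * N^(2*t) ≤ x ^ t := by
  have hx0 : (0:ℝ) < N^2/4 := by positivity
  have hNsq : ((N:ℝ)^(2:ℕ)) ^ t = N ^ (2*t) := by
    rw [← Real.rpow_natCast N 2, ← Real.rpow_mul hN.le]
    norm_num
  have e1 : (N^2/4 : ℝ) ^ t = 4^(-t) * N^(2*t) := by
    have : (N^2/4 : ℝ) = 4⁻¹ * N^2 := by ring
    rw [this, Real.mul_rpow (by norm_num) (by positivity), Real.inv_rpow (by norm_num),
      ← Real.rpow_neg (by norm_num), hNsq]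
  have e2 : (4*N^2 : ℝ) ^ t = 4^t * N^(2*t) := by
    rw [Real.mul_rpow (by norm_num) (by positivity), hNsq]
  have key := min_rpow_le (N^2/4) (4*N^2) x t hx0 h1 h2
  rw [e1, e2] at key
  refine le_trans ?_ key
  have hP : (0:ℝ) ≤ N^(2*t) := Real.rpow_nonneg hN.le _
  apply le_min
  · exact mul_le_mul_of_nonneg_right (min_le_right _ _) hP
  · exact mul_le_mul_of_nonneg_right (min_le_left _ _) hP

lemma g_integrable (d : ℕ) (s l r T : ℝ) (a : EuclideanSpace ℝ (Fin d)) (ha : a ≠ -a)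
    (hT : 0 ≤ T) :
    Integrable (fun ξ : EuclideanSpace ℝ (Fin d) =>
      (1 + ‖ξ‖ ^ 2) ^ s * ‖Sfun s l r (Q0 d) {0} {a, -a} T ξ‖ ^ 2) volume := by
  set R : ℝ := ‖a‖ + Real.sqrt d with hR
  have hR0 : 0 ≤ R := add_nonneg (norm_nonneg a) (Real.sqrt_nonneg d)
  set B : ℝ := r ^ 2 * (2 * (Mw d s (Real.sqrt d) * Mw d l R * T)) with hB
  have hB0 : 0 ≤ B := by
    have := (Mw_pos d s (Real.sqrt d)).le
    have := (Mw_pos d l R).le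
    positivity
  set C : ℝ := max ((1:ℝ) ^ s) ((1 + R ^ 2) ^ s) * B ^ 2 with hC
  have hC0 : 0 ≤ C := by
    apply mul_nonneg _ (sq_nonneg B)
    exact le_trans (Real.rpow_nonneg zero_le_one _) (le_max_left _ _)
  have hmeas : AEStronglyMeasurable (fun ξ : EuclideanSpace ℝ (Fin d) =>
      (1 + ‖ξ‖ ^ 2) ^ s * ‖Sfun s l r (Q0 d) {0} {a, -a} T ξ‖ ^ 2) volume := by
    apply Measurable.aestronglyMeasurable
    apply Measurable.mul
    · apply Continuous.measurable
      apply Continuous.rpow_const (continuous_const.add (continuous_norm.pow 2))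
      intro x; left; simp only [Pi.add_apply, Pi.pow_apply]; positivity
    · exact ((Sfun_SM d s l r T a ha).measurable.norm).pow_const 2
  apply Integrable.mono'
    (g := fun ξ => Set.indicator (Metric.closedBall (0 : EuclideanSpace ℝ (Fin d)) R)
      (fun _ => C) ξ) _ hmeas
  · apply ae_of_all
    intro ξ
    by_cases hξ : ξ ∈ Metric.closedBall (0 : EuclideanSpace ℝ (Fin d)) R
    · rw [Set.indicator_of_mem hξ]
      have hξR : ‖ξ‖ ≤ R := by rwa [Metric.mem_closedBall, dist_zero_right] at hξ
      have hg0 : (0:ℝ) ≤ (1 + ‖ξ‖ ^ 2) ^ s * ‖Sfun s l r (Q0 d) {0} {a, -a} T ξ‖ ^ 2 := by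
        positivity
      rw [Real.norm_eq_abs, abs_of_nonneg hg0]
      apply mul_le_mul
      · exact rpow_le_max 1 (1 + R ^ 2) (1 + ‖ξ‖ ^ 2) s one_pos
          (by nlinarith [norm_nonneg ξ]) (by nlinarith [norm_nonneg ξ])
      · exact pow_le_pow_left₀ (norm_nonneg _) (Sfun_norm_le d s l r T a ha hT ξ) 2
      · positivity
      · exact le_trans (Real.rpow_nonneg zero_le_one _) (le_max_left _ _)
    · rw [Set.indicator_of_notMem hξ]
      have hξR : R < ‖ξ‖ := by
        rw [Metric.mem_closedBall, dist_zero_right, not_le] at hξ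
        exact hξ
      rw [Sfun_vanish d s l r T a ha ξ hξR]
      simp
  · exact (integrable_indicator_iff measurableSet_closedBall).2
      (integrableOn_const measure_closedBall_lt_top.ne)

set_option maxHeartbeats 2000000 in
lemma main_est (d : ℕ) (hd : 0 < d) (s l : ℝ) (i : Fin d) (N : ℕ)
    (hN : 8 * ((d:ℝ) + 3) ≤ (N:ℝ)) (r T : ℝ) (hr : 0 ≤ r) (hT : 0 < T)
    (hTs : T * (7 * (N:ℝ)^2) ≤ 1) :
    (1/2:ℝ)^d * (min ((4:ℝ)^s) ((4:ℝ)^(-s)) * (N:ℝ)^(2*s)) *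
      (r^2 * ((1/4:ℝ)^d *
        (min ((1:ℝ)^(-s/2)) ((1+(d:ℝ))^(-s/2)) *
          (min ((4:ℝ)^(-l/2)) ((4:ℝ)^(-(-l/2))) * (N:ℝ)^(2*(-l/2))) * (T/2))))^2
      ≤ ∫ ξ, (1 + ‖ξ‖^2)^s *
          ‖Sfun s l r (Q0 d) {0} {aVec d i N, -(aVec d i N)} T ξ‖^2 := by
  have hd1 : (1:ℝ) ≤ d := by exact_mod_cast hd
  have hN32 : (32:ℝ) ≤ (N:ℝ) := by linarith
  have hN0 : (0:ℝ) < (N:ℝ) := by linarith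
  have hN1 : (1:ℝ) ≤ (N:ℝ) := by linarith
  set rd : ℝ := Real.sqrt d with hrdDef
  have hrd0 : 0 ≤ rd := Real.sqrt_nonneg d
  have hrdsq : rd ^ 2 = (d:ℝ) := Real.sq_sqrt (by positivity)
  have hrdN : rd ≤ (N:ℝ)/8 := by
    rw [hrdDef, show (N:ℝ)/8 = Real.sqrt (((N:ℝ)/8)^2) from
      (Real.sqrt_sq (by positivity)).symm]
    apply Real.sqrt_le_sqrt
    nlinarith
  set a : EuclideanSpace ℝ (Fin d) := aVec d i N with haDef
  have hNa : ‖a‖ = (N:ℝ) := aVec_norm d i N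
  have hane : a ≠ -a := aVec_ne_neg d i N (by exact_mod_cast hN1)
  -- constants
  set c1 : ℝ := min ((1:ℝ)^(-s/2)) ((1+(d:ℝ))^(-s/2)) with hc1Def
  have hc1 : 0 < c1 := lt_min (Real.rpow_pos_of_pos one_pos _)
    (Real.rpow_pos_of_pos (by linarith) _)
  set c2N : ℝ := min ((4:ℝ)^(-l/2)) ((4:ℝ)^(-(-l/2))) * (N:ℝ)^(2*(-l/2)) with hc2Def
  have hc2 : 0 < c2N := mul_pos (lt_min (Real.rpow_pos_of_pos (by norm_num) _)
    (Real.rpow_pos_of_pos (by norm_num) _)) (Real.rpow_pos_of_pos hN0 _)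
  set w : ℝ := c1 * c2N * (T/2) with hwDef
  have hw : 0 < w := by
    apply mul_pos (mul_pos hc1 hc2)
    linarith
  -- membership facts
  have hQpQ0 : Qp d ⊆ Q0 d := by
    intro η hη i'
    have := hη i'
    simp only [PiLp.zero_apply, sub_zero] at this
    calc |η i'| < 1/8 := this
      _ < 1/2 := by norm_num
  have hQpmeas : MeasurableSet (Qp d) := (cube_open d 0 (1/8)).measurableSet
  have hAmeas : MeasurableSet (Aset d a) := (cube_open d a (1/4)).measurableSet
  have hQpvol : (volume (Qp d)).toReal = (1/4:ℝ)^d := by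
    rw [Qp, cube_vol d 0 (1/8)]
    rw [ENNReal.toReal_pow, ENNReal.toReal_ofReal (by norm_num)]
    norm_num
  have hQpvol_ne : volume (Qp d) ≠ ⊤ := by
    rw [Qp, cube_vol d 0 (1/8)]
    exact ENNReal.pow_ne_top ENNReal.ofReal_ne_top
  have hAvol : (volume (Aset d a)).toReal = (1/2:ℝ)^d := by
    rw [Aset, cube_vol d a (1/4)]
    rw [ENNReal.toReal_pow, ENNReal.toReal_ofReal (by norm_num)]
    norm_num
  have hAvol_ne : volume (Aset d a) ≠ ⊤ := by
    rw [Aset, cube_vol d a (1/4)]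
    exact ENNReal.pow_ne_top ENNReal.ofReal_ne_top
  -- coordinate facts
  have hsub : ∀ (x y : EuclideanSpace ℝ (Fin d)) (j : Fin d), (x - y) j = x j - y j :=
    fun x y j => rfl
  have hmem2 : ∀ ξ ∈ Aset d a, ∀ η ∈ Qp d,
      ξ - η ∈ {ζ : EuclideanSpace ℝ (Fin d) | ζ - a ∈ Q0 d} := by
    intro ξ hξ η hη
    intro j
    have h1 := hξ j
    have h2 := hη j
    simp only [PiLp.zero_apply, sub_zero] at h2
    have : (ξ - η - a) j = (ξ j - a j) - η j := by
      rw [hsub, hsub]; ring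
    rw [this]
    have := abs_sub (ξ j - a j) (η j)
    calc |(ξ j - a j) - η j| ≤ |ξ j - a j| + |η j| := abs_sub _ _
      _ < 1/4 + 1/8 := add_lt_add h1 h2
      _ < 1/2 := by norm_num
  have hmem3 : ∀ ξ ∈ Aset d a, ∀ η ∈ Q0 d,
      ξ - η ∉ {ζ : EuclideanSpace ℝ (Fin d) | ζ - (-a) ∈ Q0 d} := by
    intro ξ hξ η hη hmem
    have h0 : |((ξ - η) - (-a)) i| < 1/2 := hmem i
    have hai : a i = (N:ℝ) := aVec_apply_self d i N
    have h1 : ((ξ - η) - (-a)) i = ξ i - η i + a i := by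
      rw [hsub, hsub]
      have : (-a) i = -(a i) := rfl
      rw [this]; ring
    rw [h1, hai] at h0
    have h2 := hξ i
    rw [hai] at h2
    have h3 := hη i
    rw [abs_lt] at h0 h2 h3
    linarith [h0.2, h2.1, h3.1]
  -- norm bounds
  have hnormA : ∀ ξ ∈ Aset d a, (N:ℝ) - rd ≤ ‖ξ‖ ∧ ‖ξ‖ ≤ (N:ℝ) + rd := by
    intro ξ hξ
    have h1 : ‖ξ - a‖ ≤ rd * (1/4) := by
      apply norm_le_of_cube' d (ξ - a) (1/4) (by norm_num)
      intro j
      rw [hsub]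
      exact (hξ j).le
    have h2 : |‖ξ‖ - ‖a‖| ≤ ‖ξ - a‖ := abs_norm_sub_norm_le ξ a
    rw [hNa] at h2
    rw [abs_le] at h2
    constructor <;> nlinarith [h2.1, h2.2]
  have hnormQ0 : ∀ η ∈ Q0 d, ‖η‖ ≤ rd / 2 := fun η hη => mem_Q0_norm d η hη
  have hnormSub : ∀ ξ η : EuclideanSpace ℝ (Fin d),
      ξ - η ∈ {ζ : EuclideanSpace ℝ (Fin d) | ζ - a ∈ Q0 d} →
      (N:ℝ) - rd ≤ ‖ξ - η‖ ∧ ‖ξ - η‖ ≤ (N:ℝ) + rd := by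
    intro ξ η hmem
    have h1 : ‖ξ - η - a‖ ≤ rd / 2 := mem_Q0_norm d (ξ - η - a) hmem
    have h2 : |‖ξ - η‖ - ‖a‖| ≤ ‖ξ - η - a‖ := abs_norm_sub_norm_le (ξ - η) a
    rw [hNa, abs_le] at h2
    constructor <;> nlinarith [h2.1, h2.2]
  -- kernel real-part bound
  have hKre : ∀ ξ ∈ Aset d a, ∀ η ∈ Q0 d,
      ξ - η ∈ {ζ : EuclideanSpace ℝ (Fin d) | ζ - a ∈ Q0 d} →
      T/2 ≤ (Kker T (‖ξ‖^2 - ‖η‖^2 + ‖ξ - η‖) (‖ξ‖^2 - ‖η‖^2 - ‖ξ - η‖)).re := by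
    intro ξ hξ η hη hmem
    have hξn := hnormA ξ hξ
    have hηn := hnormQ0 η hη
    have hsn := hnormSub ξ η hmem
    have hphase : ∀ P : ℝ, |P| ≤ ‖ξ‖^2 + ‖η‖^2 + ‖ξ - η‖ → ∀ σ ∈ Set.uIcc 0 T, |σ * P| ≤ 1 := by
      intro P hP σ hσ
      rw [Set.uIcc_of_le hT.le] at hσ
      have hσ1 : 0 ≤ σ := hσ.1
      have hσ2 : σ ≤ T := hσ.2
      have hbound : ‖ξ‖^2 + ‖η‖^2 + ‖ξ - η‖ ≤ 7 * (N:ℝ)^2 := by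
        nlinarith [hξn.1, hξn.2, hηn, hsn.1, hsn.2, norm_nonneg ξ, norm_nonneg η,
          norm_nonneg (ξ - η), hrd0, hrdN, hN32]
      rw [abs_mul, abs_of_nonneg hσ1]
      calc σ * |P| ≤ T * (7 * (N:ℝ)^2) := by
            apply mul_le_mul hσ2 (hP.trans hbound) (abs_nonneg P) hT.le
        _ ≤ 1 := hTs
    apply Kker_re_ge _ _ _ hT.le
    · apply hphase
      have := norm_nonneg (ξ - η)
      rw [abs_le]
      constructor <;> nlinarith [sq_nonneg ‖ξ‖, sq_nonneg ‖η‖]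
    · apply hphase
      have := norm_nonneg (ξ - η)
      rw [abs_le]
      constructor <;> nlinarith [sq_nonneg ‖ξ‖, sq_nonneg ‖η‖]
  -- nonnegativity of re Gfun on Q0
  have hpos : ∀ ξ ∈ Aset d a, ∀ η ∈ Q0 d, 0 ≤ (Gfun d s l T a ξ η).re := by
    intro ξ hξ η hη
    unfold Gfun
    by_cases hin : ξ - η ∈ {ζ : EuclideanSpace ℝ (Fin d) | ζ - a ∈ Q0 d}
    · rw [Set.indicator_of_mem hin, one_mul, Complex.re_ofReal_mul]
      apply mul_nonneg
      · positivity
      · exact le_trans (by linarith) (hKre ξ hξ η hη hin)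
    · rw [Set.indicator_of_notMem hin, zero_mul, zero_mul, Complex.zero_re]
  -- lower bound on Qp
  have hlow : ∀ ξ ∈ Aset d a, ∀ η ∈ Qp d, w ≤ (Gfun d s l T a ξ η).re := by
    intro ξ hξ η hη
    have hηQ0 : η ∈ Q0 d := hQpQ0 hη
    have hin := hmem2 ξ hξ η hη
    unfold Gfun
    rw [Set.indicator_of_mem hin, one_mul, Complex.re_ofReal_mul]
    have hw1 : c1 ≤ (1 + ‖η‖^2) ^ (-s/2) := by
      apply min_rpow_le 1 (1+(d:ℝ)) _ _ one_pos (by nlinarith [norm_nonneg η])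
      have := hnormQ0 η hηQ0
      nlinarith [norm_nonneg η]
    have hw2 : c2N ≤ (1 + ‖ξ - η‖^2) ^ (-l/2) := by
      have hsn := hnormSub ξ η hin
      have := low_weight (1 + ‖ξ - η‖^2) (N:ℝ) (-l/2) hN0
        (by nlinarith [hsn.1, hsn.2, norm_nonneg (ξ - η)])
        (by nlinarith [hsn.1, hsn.2, norm_nonneg (ξ - η)])
      exact this
    have hK := hKre ξ hξ η hηQ0 hin
    rw [hwDef]
    apply mul_le_mul (mul_le_mul hw1 hw2 hc2.le (Real.rpow_nonneg (by positivity) _))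
      hK (by linarith) (mul_nonneg (Real.rpow_nonneg (by positivity) _)
        (Real.rpow_nonneg (by positivity) _))
  -- integral lower bound
  have hre : ∀ ξ ∈ Aset d a,
      (1/4:ℝ)^d * w ≤ (∫ η in Q0 d, Gfun d s l T a ξ η).re := by
    intro ξ hξ
    have hGint := Gfun_integrableOn d s l T a ξ hT.le
    have hGre : IntegrableOn (fun η => (Gfun d s l T a ξ η).re) (Q0 d) volume := by
      have := hGint.re
      simpa [RCLike.re_to_complex, IntegrableOn] using this
    have heq : (∫ η in Q0 d, Gfun d s l T a ξ η).re
        = ∫ η in Q0 d, (Gfun d s l T a ξ η).re := by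
      have h0 := integral_re (μ := volume.restrict (Q0 d)) hGint
      simp only [RCLike.re_to_complex] at h0
      exact h0.symm
    rw [heq]
    have step1 : (1/4:ℝ)^d * w = w * (volume (Qp d)).toReal := by
      rw [hQpvol]; ring
    rw [step1]
    calc w * (volume (Qp d)).toReal ≤ ∫ η in Qp d, (Gfun d s l T a ξ η).re :=
          setIntegral_ge_of_const_le_real hQpmeas hQpvol_ne
            (fun η hη => hlow ξ hξ η hη) (hGre.mono_set hQpQ0)
      _ ≤ ∫ η in Q0 d, (Gfun d s l T a ξ η).re := by
          apply setIntegral_mono_set hGre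
          · exact (ae_restrict_iff' (Q0_meas d)).2 (ae_of_all _ fun η hη => hpos ξ hξ η hη)
          · exact (HasSubset.Subset.eventuallyLE hQpQ0)
  -- Sfun real part lower bound
  have hSlow : ∀ ξ ∈ Aset d a,
      r^2 * ((1/4:ℝ)^d * w) ≤ ‖Sfun s l r (Q0 d) {0} {a, -a} T ξ‖ := by
    intro ξ hξ
    have hI2 : ∫ η in Q0 d, Gfun d s l T (-a) ξ η = 0 := by
      apply setIntegral_eq_zero_of_forall_eq_zero
      intro η hη
      unfold Gfun
      rw [Set.indicator_of_notMem (hmem3 ξ hξ η hη), zero_mul, zero_mul]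
    have hre' : r^2 * ((1/4:ℝ)^d * w) ≤ (Sfun s l r (Q0 d) {0} {a, -a} T ξ).re := by
      rw [Sfun_eq d s l r T a hane ξ, hI2, add_zero, Complex.re_ofReal_mul]
      exact mul_le_mul_of_nonneg_left (hre ξ hξ) (sq_nonneg r)
    calc r^2 * ((1/4:ℝ)^d * w) ≤ (Sfun s l r (Q0 d) {0} {a, -a} T ξ).re := hre'
      _ ≤ ‖Sfun s l r (Q0 d) {0} {a, -a} T ξ‖ := by
          exact Complex.re_le_norm _
  -- pointwise lower bound for g on A
  set cs : ℝ := min ((4:ℝ)^s) ((4:ℝ)^(-s)) with hcsDef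
  have hcs : 0 < cs := lt_min (Real.rpow_pos_of_pos (by norm_num) _)
    (Real.rpow_pos_of_pos (by norm_num) _)
  set β : ℝ := r^2 * ((1/4:ℝ)^d * w) with hβDef
  have hβ0 : 0 ≤ β := by positivity
  have hgA : ∀ ξ ∈ Aset d a,
      cs * (N:ℝ)^(2*s) * β^2 ≤
        (1 + ‖ξ‖^2)^s * ‖Sfun s l r (Q0 d) {0} {a, -a} T ξ‖^2 := by
    intro ξ hξ
    have hξn := hnormA ξ hξ
    have houter : cs * (N:ℝ)^(2*s) ≤ (1 + ‖ξ‖^2)^s := by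
      apply low_weight (1 + ‖ξ‖^2) (N:ℝ) s hN0
      · nlinarith [hξn.1, hξn.2, norm_nonneg ξ]
      · nlinarith [hξn.1, hξn.2, norm_nonneg ξ]
    apply mul_le_mul houter
      (pow_le_pow_left₀ hβ0 (hSlow ξ hξ) 2) (sq_nonneg β) (Real.rpow_nonneg (by positivity) _)
  -- global integral bound
  have hgint := g_integrable d s l r T a hane hT.le
  have hgnn : ∀ ξ : EuclideanSpace ℝ (Fin d),
      0 ≤ (1 + ‖ξ‖^2)^s * ‖Sfun s l r (Q0 d) {0} {a, -a} T ξ‖^2 := by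
    intro ξ; positivity
  have hfinal : (1/2:ℝ)^d * (cs * (N:ℝ)^(2*s) * β^2) ≤
      ∫ ξ, (1 + ‖ξ‖^2)^s * ‖Sfun s l r (Q0 d) {0} {a, -a} T ξ‖^2 := by
    calc (1/2:ℝ)^d * (cs * (N:ℝ)^(2*s) * β^2)
        = (cs * (N:ℝ)^(2*s) * β^2) * (volume (Aset d a)).toReal := by rw [hAvol]; ring
      _ ≤ ∫ ξ in Aset d a, (1 + ‖ξ‖^2)^s * ‖Sfun s l r (Q0 d) {0} {a, -a} T ξ‖^2 :=
          setIntegral_ge_of_const_le_real hAmeas hAvol_ne hgA hgint.integrableOn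
      _ ≤ ∫ ξ, (1 + ‖ξ‖^2)^s * ‖Sfun s l r (Q0 d) {0} {a, -a} T ξ‖^2 :=
          setIntegral_le_integral hgint (ae_of_all _ hgnn)
  calc (1/2:ℝ)^d * (cs * (N:ℝ)^(2*s)) * β^2
      = (1/2:ℝ)^d * (cs * (N:ℝ)^(2*s) * β^2) := by ring
    _ ≤ _ := hfinal

set_option maxHeartbeats 1000000 in
theorem statement_17 (d : ℕ) (hd : 0 < d) (s l : ℝ) :
    ∃ c : ℝ, 0 < c ∧ ∃ N₀ : ℕ, ∀ N : ℕ, N₀ ≤ N →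
      ∀ T : ℝ, 0 < T → T ≤ c * (N : ℝ) ^ (-(2 : ℝ)) →
        c * (((Real.log N) ^ 2)⁻¹) ^ 2 * T * (N : ℝ) ^ (s - l) ≤
          (∫ ξ, (1 + ‖ξ‖ ^ 2) ^ s *
              ‖Sfun s l (((Real.log N) ^ 2)⁻¹)
                {ξ : EuclideanSpace ℝ (Fin d) | ∀ i, |ξ i| < 1 / 2}
                {0}
                {(N : ℝ) • EuclideanSpace.single (⟨0, hd⟩ : Fin d) (1 : ℝ),
                  -((N : ℝ) • EuclideanSpace.single (⟨0, hd⟩ : Fin d) (1 : ℝ))} T ξ‖ ^ 2) ^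
            (1 / 2 : ℝ) := by
  set c1 : ℝ := min ((1:ℝ)^(-s/2)) ((1+(d:ℝ))^(-s/2)) with hc1Def
  have hc1 : 0 < c1 := lt_min (Real.rpow_pos_of_pos one_pos _)
    (Real.rpow_pos_of_pos (by positivity) _)
  set c2f : ℝ := min ((4:ℝ)^(-l/2)) ((4:ℝ)^(-(-l/2))) with hc2Def
  have hc2 : 0 < c2f := lt_min (Real.rpow_pos_of_pos (by norm_num) _)
    (Real.rpow_pos_of_pos (by norm_num) _)
  set cs : ℝ := min ((4:ℝ)^s) ((4:ℝ)^(-s)) with hcsDef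
  have hcs : 0 < cs := lt_min (Real.rpow_pos_of_pos (by norm_num) _)
    (Real.rpow_pos_of_pos (by norm_num) _)
  set Kc : ℝ := (1/2:ℝ)^d * cs * ((1/4:ℝ)^d * c1 * c2f / 2)^2 with hKcDef
  have hKc : 0 < Kc := by positivity
  set c : ℝ := min (1/7) (min 1 Kc) with hcDef
  have hc0 : 0 < c := lt_min (by norm_num) (lt_min one_pos hKc)
  have hc17 : c ≤ 1/7 := min_le_left _ _
  have hc1' : c ≤ 1 := le_trans (min_le_right _ _) (min_le_left _ _)
  have hcK : c ≤ Kc := le_trans (min_le_right _ _) (min_le_right _ _)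
  refine ⟨c, hc0, 8*(d+3), ?_⟩
  intro N hN T hT hTle
  have hNc : 8 * ((d:ℝ) + 3) ≤ (N:ℝ) := by
    have : ((8*(d+3) : ℕ) : ℝ) ≤ (N:ℝ) := by exact_mod_cast hN
    push_cast at this
    linarith
  have hN0 : (0:ℝ) < (N:ℝ) := by
    have hd1 : (1:ℝ) ≤ (d:ℝ) := by exact_mod_cast hd
    linarith
  set r : ℝ := ((Real.log N)^2)⁻¹ with hrDef
  have hr : 0 ≤ r := by positivity
  -- smallness of T
  have hTs : T * (7 * (N:ℝ)^2) ≤ 1 := by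
    have hrp : (N:ℝ) ^ (-(2:ℝ)) = ((N:ℝ)^2)⁻¹ := by
      rw [Real.rpow_neg hN0.le]
      congr 1
      rw [show (2:ℝ) = ((2:ℕ):ℝ) by norm_num, Real.rpow_natCast]
    have hTle2 : T ≤ (1/7) * ((N:ℝ)^2)⁻¹ := by
      rw [hrp] at hTle
      calc T ≤ c * ((N:ℝ)^2)⁻¹ := hTle
        _ ≤ (1/7) * ((N:ℝ)^2)⁻¹ := by
            apply mul_le_mul_of_nonneg_right hc17 (by positivity)
    calc T * (7 * (N:ℝ)^2) ≤ ((1/7) * ((N:ℝ)^2)⁻¹) * (7 * (N:ℝ)^2) :=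
          mul_le_mul_of_nonneg_right hTle2 (by positivity)
      _ = 1 := by field_simp
  have hmain := main_est d hd s l ⟨0, hd⟩ N hNc r T hr hT hTs
  -- rewrite defeq names
  have haeq : aVec d ⟨0, hd⟩ N = (N : ℝ) • EuclideanSpace.single (⟨0, hd⟩ : Fin d) (1 : ℝ) := rfl
  have hQeq : Q0 d = {ξ : EuclideanSpace ℝ (Fin d) | ∀ i, |ξ i| < 1 / 2} := rfl
  rw [haeq, hQeq] at hmain
  set I : ℝ := ∫ ξ, (1 + ‖ξ‖ ^ 2) ^ s *
      ‖Sfun s l r {ξ : EuclideanSpace ℝ (Fin d) | ∀ i, |ξ i| < 1 / 2} {0}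
        {(N : ℝ) • EuclideanSpace.single (⟨0, hd⟩ : Fin d) (1 : ℝ),
          -((N : ℝ) • EuclideanSpace.single (⟨0, hd⟩ : Fin d) (1 : ℝ))} T ξ‖ ^ 2 with hIDef
  -- power identity
  have hpow : (N:ℝ)^(2*s) * ((N:ℝ)^(2*(-l/2)))^2 = ((N:ℝ)^(s-l))^2 := by
    have hadd : ∀ x y : ℝ, (N:ℝ)^x * (N:ℝ)^y = (N:ℝ)^(x+y) :=
      fun x y => (Real.rpow_add hN0 x y).symm
    calc (N:ℝ)^(2*s) * ((N:ℝ)^(2*(-l/2)))^2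
        = (N:ℝ)^(2*s) * ((N:ℝ)^(2*(-l/2)) * (N:ℝ)^(2*(-l/2))) := by ring
      _ = (N:ℝ)^(2*s) * (N:ℝ)^(2*(-l/2) + 2*(-l/2)) := by rw [hadd]
      _ = (N:ℝ)^(2*s + (2*(-l/2) + 2*(-l/2))) := by rw [hadd]
      _ = (N:ℝ)^((s-l) + (s-l)) := by
          congr 1
          ring
      _ = (N:ℝ)^(s-l) * (N:ℝ)^(s-l) := (hadd _ _).symm
      _ = ((N:ℝ)^(s-l))^2 := by ring
  have hEq : (1/2:ℝ)^d * (cs * (N:ℝ)^(2*s)) *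
      (r^2 * ((1/4:ℝ)^d * (c1 * (c2f * (N:ℝ)^(2*(-l/2))) * (T/2))))^2
      = Kc * (r^2 * T * (N:ℝ)^(s-l))^2 := by
    rw [hKcDef]
    linear_combination ((1/2:ℝ)^d * cs * (r^2)^2 * T^2 * ((1/4:ℝ)^d*c1*c2f/2)^2) * hpow
  rw [hEq] at hmain
  -- conclude
  set y : ℝ := c * r ^ 2 * T * (N:ℝ)^(s-l) with hyDef
  have hy0 : 0 ≤ y := by
    have : (0:ℝ) < (N:ℝ)^(s-l) := Real.rpow_pos_of_pos hN0 _
    positivity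
  have hXA : 0 ≤ (r^2 * T * (N:ℝ)^(s-l))^2 := sq_nonneg _
  have hy2 : y^2 ≤ I := by
    calc y^2 = c^2 * (r^2 * T * (N:ℝ)^(s-l))^2 := by rw [hyDef]; ring
      _ ≤ Kc * (r^2 * T * (N:ℝ)^(s-l))^2 := by
          apply mul_le_mul_of_nonneg_right _ hXA
          nlinarith
      _ ≤ I := hmain
  calc y = (y^2)^(1/2:ℝ) := by
        rw [← Real.rpow_natCast y 2, ← Real.rpow_mul hy0]
        norm_num
    _ ≤ I^(1/2:ℝ) := Real.rpow_le_rpow (sq_nonneg y) hy2 (by norm_num)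

end
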